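/- arXiv:1702.06573 — 3 statements merged into one kernel-verified Lean document; each statement's English description precedes it below -/
import Mathlib

section
/- Let p > 1. There exist positive constants c_p and C_p, depending only on p, such that for all a, b ∈ ℝ one has c_p K(a,b;p) ≤ F(a,b;p) ≤ C_p K(a,b;p). -/
open Real

/-- `F(a,b;p) = |b|^p − |a|^p − p a|a|^{p−2}(b−a)` (with `a|a|^{p-2} = 0` when `a = 0`,
which is automatic here since `0 ^ x = 0` for `x ≠ 0` and the factor `a = 0`). -/
noncomputable def F (p a b : ℝ) : ℝ :=
  |b| ^ p - |a| ^ p - p * a * |a| ^ (p - 2) * (b - a)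

/-- `K(a,b;p) = (b−a)² max(|a|,|b|)^{p−2}` (with the convention `K = 0` when `a = b = 0`,
which is automatic since then the factor `(b-a)² = 0`). -/
noncomputable def K (p a b : ℝ) : ℝ :=
  (b - a) ^ 2 * (max |a| |b|) ^ (p - 2)

open Set

/-- `x * x^(s-1) = x^s` for `x ≥ 0`, `s ≠ 0`. -/
lemma mul_rpow_sub_one {x s : ℝ} (hx : 0 ≤ x) (hs : s ≠ 0) :
    x * x ^ (s - 1) = x ^ s := by
  rcases eq_or_lt_of_le hx with h | h
  · rw [← h, Real.zero_rpow hs, zero_mul]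
  · rw [show s = 1 + (s - 1) by ring, Real.rpow_add h, Real.rpow_one]
    ring_nf

lemma K_nonneg (p a b : ℝ) : 0 ≤ K p a b :=
  mul_nonneg (sq_nonneg _) (Real.rpow_nonneg (le_trans (abs_nonneg a) (le_max_left _ _)) _)

lemma F_neg (p a b : ℝ) : F p (-a) (-b) = F p a b := by
  simp only [F, abs_neg]; ring

lemma K_neg (p a b : ℝ) : K p (-a) (-b) = K p a b := by
  simp only [K, abs_neg]; ring

/-- Derivative of `|t|^p` everywhere, for `p > 1`. -/
lemma FK_hasDerivAt_abs_rpow {p : ℝ} (hp : 1 < p) (x : ℝ) :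
    HasDerivAt (fun t : ℝ => |t| ^ p) (p * x * |x| ^ (p - 2)) x := by
  have hp0 : p ≠ 0 := by linarith
  have hp1 : p - 1 ≠ 0 := by intro h; linarith [h]
  rcases lt_trichotomy x 0 with hx | rfl | hx
  · have hev : (fun t : ℝ => |t| ^ p) =ᶠ[nhds x] fun t => (-t) ^ p := by
      filter_upwards [Iio_mem_nhds hx] with t ht
      rw [abs_of_neg ht]
    have houter : HasDerivAt (fun u : ℝ => u ^ p) (p * (-x) ^ (p - 1)) (-x) :=
      Real.hasDerivAt_rpow_const (Or.inl (by simpa using hx.ne))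
    have hinner : HasDerivAt (fun t : ℝ => -t) (-1) x := hasDerivAt_neg x
    have hcomp : HasDerivAt (fun t : ℝ => (-t) ^ p) (p * (-x) ^ (p - 1) * (-1)) x :=
      houter.comp x hinner
    have := hcomp.congr_of_eventuallyEq hev
    refine this.congr_deriv ?_
    rw [abs_of_neg hx, show p - 2 = (p - 1) - 1 by ring,
      ← mul_rpow_sub_one (by linarith : (0:ℝ) ≤ -x) hp1]
    ring
  · have : HasDerivAt (fun t : ℝ => |t| ^ p) 0 0 := by
      rw [hasDerivAt_iff_tendsto_slope]
      apply squeeze_zero_norm' (a := fun t : ℝ => |t| ^ (p - 1))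
      · filter_upwards [self_mem_nhdsWithin] with t ht
        have ht0 : t ≠ 0 := ht
        have habs : |t| ≠ 0 := abs_ne_zero.mpr ht0
        have : slope (fun t : ℝ => |t| ^ p) 0 t = |t| ^ p / t := by
          simp [slope, Real.zero_rpow hp0, div_eq_mul_inv]; ring
        rw [this, norm_eq_abs, abs_div, abs_of_nonneg (Real.rpow_nonneg (abs_nonneg t) p)]
        exact le_of_eq (Real.rpow_sub_one habs p).symm
      · have hc : ContinuousAt (fun t : ℝ => |t| ^ (p - 1)) 0 :=
          ContinuousAt.rpow_const continuous_abs.continuousAt (Or.inr (by linarith))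
        have := hc.tendsto.mono_left (nhdsWithin_le_nhds (s := {(0:ℝ)}ᶜ))
        simpa [Real.zero_rpow hp1] using this
    convert this using 1
    simp
  · have hev : (fun t : ℝ => |t| ^ p) =ᶠ[nhds x] fun t => t ^ p := by
      filter_upwards [Ioi_mem_nhds hx] with t ht
      rw [abs_of_pos ht]
    have hd : HasDerivAt (fun u : ℝ => u ^ p) (p * x ^ (p - 1)) x :=
      Real.hasDerivAt_rpow_const (Or.inl hx.ne')
    have := hd.congr_of_eventuallyEq hev
    refine this.congr_deriv ?_
    rw [abs_of_pos hx, show p - 2 = (p - 1) - 1 by ring,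
      ← mul_rpow_sub_one hx.le hp1]
    ring

/-- `t ↦ p t |t|^(p-2)` is monotone. -/
lemma fp'_mono {p : ℝ} (hp : 1 < p) : Monotone (fun t : ℝ => p * t * |t| ^ (p - 2)) := by
  have hp1 : p - 1 ≠ 0 := by intro h; linarith [h]
  intro x y hxy
  simp only
  rw [mul_assoc, mul_assoc]
  apply mul_le_mul_of_nonneg_left _ (by linarith : (0:ℝ) ≤ p)
  rcases le_or_gt 0 x with hx | hx
  · have hy : 0 ≤ y := hx.trans hxy
    rw [abs_of_nonneg hx, abs_of_nonneg hy, show p - 2 = (p - 1) - 1 by ring,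
      mul_rpow_sub_one hx hp1, mul_rpow_sub_one hy hp1]
    exact Real.rpow_le_rpow hx hxy (by linarith)
  · rcases le_or_gt 0 y with hy | hy
    · have h1 : x * |x| ^ (p - 2) ≤ 0 :=
        mul_nonpos_iff.mpr (Or.inr ⟨hx.le, Real.rpow_nonneg (abs_nonneg x) _⟩)
      have h2 : 0 ≤ y * |y| ^ (p - 2) :=
        mul_nonneg hy (Real.rpow_nonneg (abs_nonneg y) _)
      linarith
    · rw [abs_of_neg hx, abs_of_neg hy]
      have e1 : x * (-x) ^ (p - 2) = -((-x) ^ (p - 1)) := by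
        rw [show p - 2 = (p - 1) - 1 by ring, ← mul_rpow_sub_one (by linarith : (0:ℝ) ≤ -x) hp1]
        ring
      have e2 : y * (-y) ^ (p - 2) = -((-y) ^ (p - 1)) := by
        rw [show p - 2 = (p - 1) - 1 by ring, ← mul_rpow_sub_one (by linarith : (0:ℝ) ≤ -y) hp1]
        ring
      rw [e1, e2, neg_le_neg_iff]
      exact Real.rpow_le_rpow (by linarith) (by linarith) (by linarith)

/-- Derivative of `s ↦ p s |s|^(p-2)` at a positive point. -/
lemma hasDerivAt_fp' {p : ℝ} (hp : 1 < p) {t : ℝ} (ht : 0 < t) :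
    HasDerivAt (fun s : ℝ => p * s * |s| ^ (p - 2)) (p * (p - 1) * t ^ (p - 2)) t := by
  have hp1 : p - 1 ≠ 0 := by intro h; linarith [h]
  have hev : (fun s : ℝ => p * s * |s| ^ (p - 2)) =ᶠ[nhds t] fun s => p * s ^ (p - 1) := by
    filter_upwards [Ioi_mem_nhds ht] with s hs
    rw [abs_of_pos hs, mul_assoc, show p - 2 = (p - 1) - 1 by ring, mul_rpow_sub_one hs.le hp1]
  have hd : HasDerivAt (fun s : ℝ => p * s ^ (p - 1)) (p * ((p - 1) * t ^ (p - 1 - 1))) t :=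
    (Real.hasDerivAt_rpow_const (Or.inl ht.ne')).const_mul p
  have := hd.congr_of_eventuallyEq hev
  refine this.congr_deriv ?_
  rw [show p - 1 - 1 = p - 2 by ring]
  ring

/-- Supporting line inequality for a function with monotone derivative on a convex set. -/
lemma support_line {φ φ' : ℝ → ℝ} {s : Set ℝ} (hs : Convex ℝ s)
    (hder : ∀ t ∈ s, HasDerivAt φ (φ' t) t) (hmono : MonotoneOn φ' s)
    {x y : ℝ} (hx : x ∈ s) (hy : y ∈ s) :
    φ x + φ' x * (y - x) ≤ φ y := by
  rcases lt_trichotomy x y with h | rfl | h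
  · have hsub : Icc x y ⊆ s := hs.ordConnected.out hx hy
    obtain ⟨c, hc, hceq⟩ := exists_hasDerivAt_eq_slope φ φ' h
      (fun t ht => (hder t (hsub ht)).continuousAt.continuousWithinAt)
      (fun t ht => hder t (hsub (Ioo_subset_Icc_self ht)))
    have hcs : c ∈ s := hsub (Ioo_subset_Icc_self hc)
    have hmc : φ' x ≤ φ' c := hmono hx hcs hc.1.le
    have hyx : (0:ℝ) < y - x := sub_pos.2 h
    have heq : φ y - φ x = φ' c * (y - x) := by
      rw [hceq]; field_simp
    nlinarith [mul_le_mul_of_nonneg_right hmc hyx.le]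
  · simp
  · have hsub : Icc y x ⊆ s := hs.ordConnected.out hy hx
    obtain ⟨c, hc, hceq⟩ := exists_hasDerivAt_eq_slope φ φ' h
      (fun t ht => (hder t (hsub ht)).continuousAt.continuousWithinAt)
      (fun t ht => hder t (hsub (Ioo_subset_Icc_self ht)))
    have hcs : c ∈ s := hsub (Ioo_subset_Icc_self hc)
    have hmc : φ' c ≤ φ' x := hmono hcs hx hc.2.le
    have hxy : (0:ℝ) < x - y := sub_pos.2 h
    have heq : φ x - φ y = φ' c * (x - y) := by
      rw [hceq]; field_simp
    nlinarith [mul_le_mul_of_nonneg_right hmc hxy.le]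

lemma F_nonneg {p : ℝ} (hp : 1 < p) (a b : ℝ) : 0 ≤ F p a b := by
  have hsl := support_line (s := Set.univ) convex_univ
    (fun t _ => FK_hasDerivAt_abs_rpow hp t) ((fp'_mono hp).monotoneOn _)
    (Set.mem_univ a) (Set.mem_univ b)
  have key : F p a b = |b| ^ p - (|a| ^ p + (p * a * |a| ^ (p - 2)) * (b - a)) := by
    simp only [F]; ring
  rw [key]
  linarith

/-- Splitting monotonicity: for `m` between `a` and `b`, both `F p a m` and `F p m b`
are at most `F p a b`. -/
lemma F_sub_le {p : ℝ} (hp : 1 < p) {a b m : ℝ} (hm : m ∈ Icc (min a b) (max a b)) :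
    F p a m ≤ F p a b ∧ F p m b ≤ F p a b := by
  have hid : F p a b
      = F p a m + F p m b + (p * m * |m| ^ (p - 2) - p * a * |a| ^ (p - 2)) * (b - m) := by
    simp only [F]; ring
  have h1 := F_nonneg hp a m
  have h2 := F_nonneg hp m b
  have h3 : 0 ≤ (p * m * |m| ^ (p - 2) - p * a * |a| ^ (p - 2)) * (b - m) := by
    rcases le_total a b with h | h
    · rw [min_eq_left h, max_eq_right h] at hm
      exact mul_nonneg (sub_nonneg.2 (fp'_mono hp hm.1)) (sub_nonneg.2 hm.2)
    · rw [min_eq_right h, max_eq_left h] at hm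
      have u1 : p * m * |m| ^ (p - 2) - p * a * |a| ^ (p - 2) ≤ 0 :=
        sub_nonpos.2 (fp'_mono hp hm.2)
      have u2 : b - m ≤ 0 := sub_nonpos.2 hm.1
      have := mul_nonneg (neg_nonneg.2 u1) (neg_nonneg.2 u2)
      rwa [neg_mul_neg] at this
  constructor <;> linarith

/-- Ratio comparison for rpow: comparable positive bases give comparable powers. -/
lemma rpow_ratio {q ρ x y : ℝ} (hρ : 1 ≤ ρ) (hx : 0 < x) (hy : 0 < y)
    (h1 : y ≤ ρ * x) (h2 : x ≤ ρ * y) : y ^ q ≤ ρ ^ |q| * x ^ q := by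
  have hρ0 : (0:ℝ) < ρ := lt_of_lt_of_le one_pos hρ
  rcases le_or_gt 0 q with hq | hq
  · rw [abs_of_nonneg hq, ← Real.mul_rpow hρ0.le hx.le]
    exact Real.rpow_le_rpow hy.le h1 hq
  · rw [abs_of_neg hq]
    have h3 : (ρ * y) ^ q ≤ x ^ q := Real.rpow_le_rpow_of_nonpos hx h2 hq.le
    rw [Real.mul_rpow hρ0.le hy.le] at h3
    have hcalc : y ^ q = ρ ^ (-q) * (ρ ^ q * y ^ q) := by
      rw [← mul_assoc, ← Real.rpow_add hρ0]
      simp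
    rw [hcalc]
    exact mul_le_mul_of_nonneg_left h3 (Real.rpow_nonneg hρ0.le _)

lemma ratio_lower {q ρ x y : ℝ} (hρ : 1 ≤ ρ) (hx : 0 < x) (hy : 0 < y)
    (h1 : y ≤ ρ * x) (h2 : x ≤ ρ * y) : ρ ^ (-|q|) * y ^ q ≤ x ^ q := by
  have hρ0 : (0:ℝ) < ρ := lt_of_lt_of_le one_pos hρ
  have h := rpow_ratio (q := q) hρ hx hy h1 h2
  have hcalc : ρ ^ (-|q|) * (ρ ^ |q| * x ^ q) = x ^ q := by
    rw [← mul_assoc, ← Real.rpow_add hρ0]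
    simp
  calc ρ ^ (-|q|) * y ^ q ≤ ρ ^ (-|q|) * (ρ ^ |q| * x ^ q) :=
        mul_le_mul_of_nonneg_left h (Real.rpow_nonneg hρ0.le _)
    _ = x ^ q := hcalc

/-- Lower quadratic bound on an interval `[l,r]` with `l > 0`. -/
lemma sq_lower_aux {p : ℝ} (hp : 1 < p) {l r x y μ : ℝ} (hl : 0 < l)
    (hμ : ∀ t ∈ Ioo l r, μ ≤ p * (p - 1) * t ^ (p - 2))
    (hx : x ∈ Icc l r) (hy : y ∈ Icc l r) :
    μ / 2 * (y - x) ^ 2 ≤ F p x y := by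
  set φ : ℝ → ℝ := fun t => |t| ^ p - μ / 2 * t ^ 2 with hφ
  set φ' : ℝ → ℝ := fun t => p * t * |t| ^ (p - 2) - μ * t with hφ'
  have hder : ∀ t ∈ Icc l r, HasDerivAt φ (φ' t) t := by
    intro t _
    have h1 := (FK_hasDerivAt_abs_rpow hp t).sub
      (((hasDerivAt_pow 2 t)).const_mul (μ / 2))
    refine h1.congr_deriv ?_
    simp [hφ']; ring
  have hder2 : ∀ t ∈ Icc l r, HasDerivAt φ' (p * (p - 1) * t ^ (p - 2) - μ) t := by
    intro t ht
    have ht0 : 0 < t := lt_of_lt_of_le hl ht.1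
    have h1 := (hasDerivAt_fp' hp ht0).sub ((hasDerivAt_id t).const_mul μ)
    refine h1.congr_deriv ?_
    ring
  have hmono : MonotoneOn φ' (Icc l r) := by
    apply monotoneOn_of_deriv_nonneg (convex_Icc l r)
    · intro t ht
      exact ((hder2 t ht).continuousAt).continuousWithinAt
    · rw [interior_Icc]
      intro t ht
      exact ((hder2 t (Ioo_subset_Icc_self ht)).differentiableAt).differentiableWithinAt
    · rw [interior_Icc]
      intro t ht
      rw [(hder2 t (Ioo_subset_Icc_self ht)).deriv]
      have := hμ t ht
      linarith
  have hsl := support_line (convex_Icc l r) hder hmono hx hy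
  simp only [hφ, hφ'] at hsl
  simp only [F]
  nlinarith [hsl]

/-- Upper quadratic bound on an interval `[l,r]` with `l > 0`. -/
lemma sq_upper_aux {p : ℝ} (hp : 1 < p) {l r x y ν : ℝ} (hl : 0 < l)
    (hν : ∀ t ∈ Ioo l r, p * (p - 1) * t ^ (p - 2) ≤ ν)
    (hx : x ∈ Icc l r) (hy : y ∈ Icc l r) :
    F p x y ≤ ν / 2 * (y - x) ^ 2 := by
  set φ : ℝ → ℝ := fun t => ν / 2 * t ^ 2 - |t| ^ p with hφ
  set φ' : ℝ → ℝ := fun t => ν * t - p * t * |t| ^ (p - 2) with hφ'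
  have hder : ∀ t ∈ Icc l r, HasDerivAt φ (φ' t) t := by
    intro t _
    have h1 := (((hasDerivAt_pow 2 t)).const_mul (ν / 2)).sub
      (FK_hasDerivAt_abs_rpow hp t)
    refine h1.congr_deriv ?_
    simp [hφ']; ring
  have hder2 : ∀ t ∈ Icc l r, HasDerivAt φ' (ν - p * (p - 1) * t ^ (p - 2)) t := by
    intro t ht
    have ht0 : 0 < t := lt_of_lt_of_le hl ht.1
    have h1 := ((hasDerivAt_id t).const_mul ν).sub (hasDerivAt_fp' hp ht0)
    refine h1.congr_deriv ?_
    ring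
  have hmono : MonotoneOn φ' (Icc l r) := by
    apply monotoneOn_of_deriv_nonneg (convex_Icc l r)
    · intro t ht
      exact ((hder2 t ht).continuousAt).continuousWithinAt
    · rw [interior_Icc]
      intro t ht
      exact ((hder2 t (Ioo_subset_Icc_self ht)).differentiableAt).differentiableWithinAt
    · rw [interior_Icc]
      intro t ht
      rw [(hder2 t (Ioo_subset_Icc_self ht)).deriv]
      have := hν t ht
      linarith
  have hsl := support_line (convex_Icc l r) hder hmono hx hy
  simp only [hφ, hφ'] at hsl
  simp only [F]
  nlinarith [hsl]

/-- Near-diagonal two-sided bound, for `a > 0` and `|b - a| ≤ a/2`. -/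
lemma near_bounds {p : ℝ} (hp : 1 < p) {a b : ℝ} (ha : 0 < a) (hd : |b - a| ≤ a / 2) :
    p * (p - 1) / 2 * 3 ^ (-|p - 2|) * K p a b ≤ F p a b ∧
    F p a b ≤ p * (p - 1) / 2 * 3 ^ (|p - 2|) * K p a b := by
  obtain ⟨hd1, hd2⟩ := abs_le.mp hd
  have hb1 : a / 2 ≤ b := by linarith
  have hb2 : b ≤ 3 * a / 2 := by linarith
  have hb : 0 < b := by linarith
  have hxa : a ∈ Icc (a / 2) (3 * a / 2) := ⟨by linarith, by linarith⟩
  have hyb : b ∈ Icc (a / 2) (3 * a / 2) := ⟨hb1, hb2⟩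
  have hl : (0:ℝ) < a / 2 := by linarith
  set M := max a b with hMdef
  have hM1 : a ≤ M := le_max_left _ _
  have hM2 : M ≤ 3 * a / 2 := max_le (by linarith) hb2
  have hM0 : 0 < M := lt_of_lt_of_le ha hM1
  have hKeq : K p a b = (b - a) ^ 2 * M ^ (p - 2) := by
    simp only [K, hMdef]
    rw [abs_of_pos ha, abs_of_pos hb]
  constructor
  · have hμ : ∀ t ∈ Ioo (a / 2) (3 * a / 2),
        p * (p - 1) * ((3:ℝ) ^ (-|p - 2|) * M ^ (p - 2)) ≤ p * (p - 1) * t ^ (p - 2) := by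
      intro t ht
      have ht0 : 0 < t := lt_trans hl ht.1
      have hr := ratio_lower (q := p - 2) (ρ := 3) (by norm_num) ht0 hM0
        (by nlinarith [ht.1] : M ≤ 3 * t) (by nlinarith [ht.2, hM1] : t ≤ 3 * M)
      exact mul_le_mul_of_nonneg_left hr (by nlinarith : (0:ℝ) ≤ p * (p - 1))
    have hlow := sq_lower_aux hp hl hμ hxa hyb
    rw [hKeq]
    nlinarith [hlow]
  · have hν : ∀ t ∈ Ioo (a / 2) (3 * a / 2),
        p * (p - 1) * t ^ (p - 2) ≤ p * (p - 1) * ((3:ℝ) ^ (|p - 2|) * M ^ (p - 2)) := by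
      intro t ht
      have ht0 : 0 < t := lt_trans hl ht.1
      have hr := rpow_ratio (q := p - 2) (ρ := 3) (by norm_num) hM0 ht0
        (by nlinarith [ht.2, hM1] : t ≤ 3 * M) (by nlinarith [ht.1] : M ≤ 3 * t)
      exact mul_le_mul_of_nonneg_left hr (by nlinarith : (0:ℝ) ≤ p * (p - 1))
    have hupp := sq_upper_aux hp hl hν hxa hyb
    rw [hKeq]
    nlinarith [hupp]

lemma F_zero_right {p : ℝ} (hp : 1 < p) (a : ℝ) : F p a 0 = (p - 1) * |a| ^ p := by
  have hp0 : p ≠ 0 := by linarith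
  have habs : a * |a| ^ (p - 2) * a = |a| ^ p := by
    have h1 : a * a = |a| * |a| := (abs_mul_abs_self a).symm
    have e1 : |a| * |a| ^ (p - 2) = |a| ^ (p - 1) := by
      rw [show p - 2 = (p - 1) - 1 by ring]
      exact mul_rpow_sub_one (abs_nonneg a) (by intro h; linarith [h] : p - 1 ≠ 0)
    have e2 : |a| * |a| ^ (p - 1) = |a| ^ p := mul_rpow_sub_one (abs_nonneg a) hp0
    calc a * |a| ^ (p - 2) * a = (|a| * |a|) * |a| ^ (p - 2) := by rw [← h1]; ring
      _ = |a| * (|a| * |a| ^ (p - 2)) := by ring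
      _ = |a| * |a| ^ (p - 1) := by rw [e1]
      _ = |a| ^ p := e2
  have : F p a 0 = - |a| ^ p + p * (a * |a| ^ (p - 2) * a) := by
    simp only [F]
    rw [abs_zero, Real.zero_rpow hp0]
    ring
  rw [this, habs]
  ring

lemma F_zero_left {p : ℝ} (hp : 1 < p) (b : ℝ) : F p 0 b = |b| ^ p := by
  simp [F, Real.zero_rpow (show p ≠ 0 by linarith)]

/-- Far-region lower bound when `0` lies between `a` and `b`. -/
lemma far_zero_lower {p : ℝ} (hp : 1 < p) {a b : ℝ} (hab : a ≠ b)
    (h0 : min a b ≤ 0) (h0' : 0 ≤ max a b) :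
    min (p - 1) 1 / 4 * K p a b ≤ F p a b := by
  set M := max |a| |b| with hMdef
  have hM0 : 0 < M := by
    rcases eq_or_ne a 0 with rfl | ha
    · have hb : b ≠ 0 := fun h => hab (h.symm ▸ rfl)
      exact lt_of_lt_of_le (abs_pos.mpr hb) (le_max_right _ _)
    · exact lt_of_lt_of_le (abs_pos.mpr ha) (le_max_left _ _)
  obtain ⟨hFa0, hF0b⟩ := F_sub_le hp (a := a) (b := b) (m := 0) ⟨h0, h0'⟩
  rw [F_zero_right hp] at hFa0
  rw [F_zero_left hp] at hF0b
  have hd : |b - a| ≤ 2 * M := by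
    calc |b - a| ≤ |b| + |a| := abs_sub _ _
      _ ≤ M + M := add_le_add (le_max_right _ _) (le_max_left _ _)
      _ = 2 * M := by ring
  have hMp : M ^ 2 * M ^ (p - 2) = M ^ p := by
    rw [← Real.rpow_natCast M 2, ← Real.rpow_add hM0]
    norm_num
  have hK : K p a b ≤ 4 * M ^ p := by
    have h1 : (b - a) ^ 2 ≤ (2 * M) ^ 2 := by
      rw [← sq_abs (b - a)]
      apply pow_le_pow_left₀ (abs_nonneg _) hd
    have h2 : (b - a) ^ 2 * M ^ (p - 2) ≤ (2 * M) ^ 2 * M ^ (p - 2) :=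
      mul_le_mul_of_nonneg_right h1 (Real.rpow_nonneg hM0.le _)
    calc K p a b = (b - a) ^ 2 * M ^ (p - 2) := by simp only [K, hMdef]
      _ ≤ (2 * M) ^ 2 * M ^ (p - 2) := h2
      _ = 4 * (M ^ 2 * M ^ (p - 2)) := by ring
      _ = 4 * M ^ p := by rw [hMp]
  have hmin0 : 0 < min (p - 1) 1 := lt_min (by linarith) one_pos
  have hMF : min (p - 1) 1 * M ^ p ≤ F p a b := by
    rcases max_choice |a| |b| with h | h
    · calc min (p - 1) 1 * M ^ p ≤ (p - 1) * M ^ p :=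
            mul_le_mul_of_nonneg_right (min_le_left _ _) (Real.rpow_nonneg hM0.le _)
        _ = (p - 1) * |a| ^ p := by rw [hMdef, h]
        _ ≤ F p a b := hFa0
    · calc min (p - 1) 1 * M ^ p ≤ 1 * M ^ p :=
            mul_le_mul_of_nonneg_right (min_le_right _ _) (Real.rpow_nonneg hM0.le _)
        _ = |b| ^ p := by rw [one_mul, hMdef, h]
        _ ≤ F p a b := hF0b
  calc min (p - 1) 1 / 4 * K p a b ≤ min (p - 1) 1 / 4 * (4 * M ^ p) := by
        apply mul_le_mul_of_nonneg_left hK (by linarith)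
    _ = min (p - 1) 1 * M ^ p := by ring
    _ ≤ F p a b := hMF

/-- Far-region lower bound when both endpoints are positive. -/
lemma far_pos_lower {p : ℝ} (hp : 1 < p) {a b : ℝ} (ha : 0 < a) (hb : 0 < b)
    (hfar : a < 2 * |b - a|) :
    p * (p - 1) / 8 * 2 ^ (-|p - 2|) * K p a b ≤ F p a b := by
  have hpp : (0:ℝ) < p * (p - 1) := by nlinarith
  rcases lt_trichotomy a b with hab | rfl | hab
  · -- a < b, d = b - a
    have habs : |b - a| = b - a := abs_of_pos (by linarith)
    rw [habs] at hfar
    set d := b - a with hddef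
    have hd0 : 0 < d := by simp only [hddef]; linarith
    have hbd : d < b := by simp only [hddef]; linarith
    set m := max a (b / 2) with hmdef
    have hm_mem : m ∈ Icc (min a b) (max a b) := by
      rw [min_eq_left hab.le, max_eq_right hab.le]
      exact ⟨le_max_left _ _, max_le hab.le (by linarith)⟩
    have htool := (F_sub_le hp hm_mem).2
    have hx : m ∈ Icc (b / 2) b := ⟨le_max_right _ _, max_le hab.le (by linarith)⟩
    have hyb : b ∈ Icc (b / 2) b := ⟨by linarith, le_rfl⟩
    have hμ : ∀ t ∈ Ioo (b / 2) b,
        p * (p - 1) * ((2:ℝ) ^ (-|p - 2|) * b ^ (p - 2)) ≤ p * (p - 1) * t ^ (p - 2) := by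
      intro t ht
      have ht0 : 0 < t := by linarith [ht.1]
      have hr := ratio_lower (q := p - 2) (ρ := 2) (by norm_num) ht0 hb
        (by linarith [ht.1] : b ≤ 2 * t) (by linarith [ht.2] : t ≤ 2 * b)
      exact mul_le_mul_of_nonneg_left hr hpp.le
    have hlow := sq_lower_aux hp (by linarith : (0:ℝ) < b / 2) hμ hx hyb
    have hbm : d / 2 ≤ b - m := by
      have h1 : a ≤ b - d / 2 := by simp only [hddef]; linarith
      have h2 : b / 2 ≤ b - d / 2 := by linarith
      have : m ≤ b - d / 2 := max_le h1 h2
      linarith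
    have hsq : (d / 2) ^ 2 ≤ (b - m) ^ 2 :=
      pow_le_pow_left₀ (by linarith) hbm 2
    have hKeq : K p a b = d ^ 2 * b ^ (p - 2) := by
      simp only [K, hddef]
      rw [abs_of_pos ha, abs_of_pos hb, max_eq_right hab.le]
    rw [hKeq]
    have hμpos : 0 ≤ p * (p - 1) * ((2:ℝ) ^ (-|p - 2|) * b ^ (p - 2)) := by
      apply mul_nonneg hpp.le
      exact mul_nonneg (Real.rpow_nonneg (by norm_num) _) (Real.rpow_nonneg hb.le _)
    nlinarith [hlow, htool, mul_le_mul_of_nonneg_left hsq (by linarith [hμpos] :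
      (0:ℝ) ≤ p * (p - 1) * ((2:ℝ) ^ (-|p - 2|) * b ^ (p - 2)) / 2)]
  · simp at hfar; linarith
  · -- b < a, d = a - b
    have habs : |b - a| = a - b := by rw [abs_sub_comm]; exact abs_of_pos (by linarith)
    rw [habs] at hfar
    set d := a - b with hddef
    have hd0 : 0 < d := by simp only [hddef]; linarith
    have had : d < a := by simp only [hddef]; linarith
    set m := max b (a / 2) with hmdef
    have hm_mem : m ∈ Icc (min a b) (max a b) := by
      rw [min_eq_right hab.le, max_eq_left hab.le]
      exact ⟨le_max_left _ _, max_le hab.le (by linarith)⟩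
    have htool := (F_sub_le hp hm_mem).1
    have hx : a ∈ Icc (a / 2) a := ⟨by linarith, le_rfl⟩
    have hy : m ∈ Icc (a / 2) a := ⟨le_max_right _ _, max_le hab.le (by linarith)⟩
    have hμ : ∀ t ∈ Ioo (a / 2) a,
        p * (p - 1) * ((2:ℝ) ^ (-|p - 2|) * a ^ (p - 2)) ≤ p * (p - 1) * t ^ (p - 2) := by
      intro t ht
      have ht0 : 0 < t := by linarith [ht.1]
      have hr := ratio_lower (q := p - 2) (ρ := 2) (by norm_num) ht0 ha
        (by linarith [ht.1] : a ≤ 2 * t) (by linarith [ht.2] : t ≤ 2 * a)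
      exact mul_le_mul_of_nonneg_left hr hpp.le
    have hlow := sq_lower_aux hp (by linarith : (0:ℝ) < a / 2) hμ hx hy
    have ham : d / 2 ≤ a - m := by
      have h1 : b ≤ a - d / 2 := by simp only [hddef]; linarith
      have h2 : a / 2 ≤ a - d / 2 := by linarith
      have : m ≤ a - d / 2 := max_le h1 h2
      linarith
    have hsq : (d / 2) ^ 2 ≤ (m - a) ^ 2 := by
      have : (m - a) ^ 2 = (a - m) ^ 2 := by ring
      rw [this]
      exact pow_le_pow_left₀ (by linarith) ham 2
    have hKeq : K p a b = d ^ 2 * a ^ (p - 2) := by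
      simp only [K, hddef]
      rw [abs_of_pos ha, abs_of_pos hb, max_eq_left hab.le]
      ring_nf
    rw [hKeq]
    have hμpos : 0 ≤ p * (p - 1) * ((2:ℝ) ^ (-|p - 2|) * a ^ (p - 2)) := by
      apply mul_nonneg hpp.le
      exact mul_nonneg (Real.rpow_nonneg (by norm_num) _) (Real.rpow_nonneg ha.le _)
    nlinarith [hlow, htool, mul_le_mul_of_nonneg_left hsq (by linarith [hμpos] :
      (0:ℝ) ≤ p * (p - 1) * ((2:ℝ) ^ (-|p - 2|) * a ^ (p - 2)) / 2)]

/-- Far-region upper bound. -/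
lemma far_upper {p : ℝ} (hp : 1 < p) {a b : ℝ} (hfar : |a| < 2 * |b - a|) :
    F p a b ≤ ((3:ℝ) ^ p + 2 ^ p + p * 2 ^ (p - 1)) * 3 ^ (|p - 2|) * K p a b := by
  have hp0 : (0:ℝ) < p := by linarith
  set d := |b - a| with hddef
  have hd : 0 < d := by
    have h1 : (0:ℝ) ≤ |a| := abs_nonneg a
    simp only [hddef]; linarith
  set M := max |a| |b| with hMdef
  have haM : |a| ≤ M := le_max_left _ _
  have hbM : |b| ≤ M := le_max_right _ _
  have hb3 : |b| < 3 * d := by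
    have h1 : |b| ≤ |a| + |b - a| := by
      calc |b| = |a + (b - a)| := by ring_nf
        _ ≤ |a| + |b - a| := abs_add_le _ _
    simp only [hddef] at *
    linarith
  have hM3 : M ≤ 3 * d := max_le (by linarith) hb3.le
  have hdM : d ≤ 2 * M := by
    calc d = |b - a| := hddef
      _ ≤ |b| + |a| := abs_sub _ _
      _ ≤ M + M := add_le_add hbM haM
      _ = 2 * M := by ring
  have hM0 : 0 < M := by linarith
  have h1 : F p a b ≤ |b| ^ p + |a| ^ p + p * |a| ^ (p - 1) * d := by
    have habsT : |p * a * |a| ^ (p - 2) * (b - a)| = p * |a| ^ (p - 1) * d := by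
      rw [abs_mul, abs_mul, abs_mul, abs_of_pos hp0,
        abs_of_nonneg (Real.rpow_nonneg (abs_nonneg a) _)]
      have e1 : |a| * |a| ^ (p - 2) = |a| ^ (p - 1) := by
        rw [show p - 2 = (p - 1) - 1 by ring]
        exact mul_rpow_sub_one (abs_nonneg a) (by intro h; linarith [h] : p - 1 ≠ 0)
      rw [mul_assoc p |a| (|a| ^ (p - 2)), e1, hddef]
    have hT1 := neg_abs_le (p * a * |a| ^ (p - 2) * (b - a))
    have hT2 : 0 ≤ |a| ^ p := Real.rpow_nonneg (abs_nonneg a) _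
    simp only [F]
    rw [habsT] at hT1
    linarith
  have h2 : |b| ^ p ≤ (3 * d) ^ p := Real.rpow_le_rpow (abs_nonneg b) hb3.le hp0.le
  have h3 : |a| ^ p ≤ (2 * d) ^ p := Real.rpow_le_rpow (abs_nonneg a) (by linarith) hp0.le
  have h4 : |a| ^ (p - 1) ≤ (2 * d) ^ (p - 1) :=
    Real.rpow_le_rpow (abs_nonneg a) (by linarith) (by linarith)
  have e2 : (3 * d) ^ p = 3 ^ p * d ^ p := Real.mul_rpow (by norm_num) hd.le
  have e3 : (2 * d) ^ p = 2 ^ p * d ^ p := Real.mul_rpow (by norm_num) hd.le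
  have e4 : (2 * d) ^ (p - 1) = 2 ^ (p - 1) * d ^ (p - 1) := Real.mul_rpow (by norm_num) hd.le
  have e5 : d ^ (p - 1) * d = d ^ p := by
    have := mul_rpow_sub_one hd.le (show p ≠ 0 by linarith)
    linarith [this]
  have hF1 : F p a b ≤ ((3:ℝ) ^ p + 2 ^ p + p * 2 ^ (p - 1)) * d ^ p := by
    have h6 : p * |a| ^ (p - 1) * d ≤ p * (2 ^ (p - 1) * d ^ (p - 1)) * d := by
      apply mul_le_mul_of_nonneg_right _ hd.le
      apply mul_le_mul_of_nonneg_left _ hp0.le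
      rw [← e4]; exact h4
    have h7 : p * (2 ^ (p - 1) * d ^ (p - 1)) * d = p * 2 ^ (p - 1) * d ^ p := by
      calc p * (2 ^ (p - 1) * d ^ (p - 1)) * d = p * 2 ^ (p - 1) * (d ^ (p - 1) * d) := by ring
        _ = p * 2 ^ (p - 1) * d ^ p := by rw [e5]
    rw [e2] at h2; rw [e3] at h3
    nlinarith [h1, h2, h3, h6, h7]
  have e6 : d ^ 2 * d ^ (p - 2) = d ^ p := by
    rw [← Real.rpow_natCast d 2, ← Real.rpow_add hd]
    norm_num
  have hratio : d ^ (p - 2) ≤ 3 ^ (|p - 2|) * M ^ (p - 2) :=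
    rpow_ratio (q := p - 2) (ρ := 3) (by norm_num) hM0 hd (by linarith) (by linarith)
  have hKeq : K p a b = d ^ 2 * M ^ (p - 2) := by
    simp only [K, hMdef, hddef, ← sq_abs (b - a)]
  have hA : (0:ℝ) < (3:ℝ) ^ p + 2 ^ p + p * 2 ^ (p - 1) := by
    have u1 : (0:ℝ) < (3:ℝ) ^ p := Real.rpow_pos_of_pos (by norm_num) _
    have u2 : (0:ℝ) < (2:ℝ) ^ p := Real.rpow_pos_of_pos (by norm_num) _
    have u3 : (0:ℝ) < (2:ℝ) ^ (p - 1) := Real.rpow_pos_of_pos (by norm_num) _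
    nlinarith
  rw [hKeq]
  calc F p a b ≤ ((3:ℝ) ^ p + 2 ^ p + p * 2 ^ (p - 1)) * d ^ p := hF1
    _ = ((3:ℝ) ^ p + 2 ^ p + p * 2 ^ (p - 1)) * (d ^ 2 * d ^ (p - 2)) := by rw [e6]
    _ ≤ ((3:ℝ) ^ p + 2 ^ p + p * 2 ^ (p - 1)) * (d ^ 2 * (3 ^ (|p - 2|) * M ^ (p - 2))) := by
        apply mul_le_mul_of_nonneg_left _ hA.le
        exact mul_le_mul_of_nonneg_left hratio (sq_nonneg d)
    _ = ((3:ℝ) ^ p + 2 ^ p + p * 2 ^ (p - 1)) * 3 ^ (|p - 2|) * (d ^ 2 * M ^ (p - 2)) := by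
        ring

lemma lower_main {p : ℝ} (hp : 1 < p) (a b : ℝ) :
    min (p * (p - 1) / 2 * 3 ^ (-|p - 2|))
      (min (min (p - 1) 1 / 4) (p * (p - 1) / 8 * 2 ^ (-|p - 2|))) * K p a b ≤ F p a b := by
  set c := min (p * (p - 1) / 2 * 3 ^ (-|p - 2|))
      (min (min (p - 1) 1 / 4) (p * (p - 1) / 8 * 2 ^ (-|p - 2|))) with hcdef
  have hKn : 0 ≤ K p a b := K_nonneg p a b
  have hc1 : c ≤ p * (p - 1) / 2 * 3 ^ (-|p - 2|) := min_le_left _ _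
  have hc2 : c ≤ min (p - 1) 1 / 4 := le_trans (min_le_right _ _) (min_le_left _ _)
  have hc3 : c ≤ p * (p - 1) / 8 * 2 ^ (-|p - 2|) := le_trans (min_le_right _ _) (min_le_right _ _)
  rcases eq_or_ne a b with rfl | hab
  · have hF : F p a a = 0 := by simp [F]
    have hK : K p a a = 0 := by simp [K]
    rw [hF, hK, mul_zero]
  by_cases hnear : |b - a| ≤ |a| / 2
  · have ha0 : a ≠ 0 := by
      rintro rfl
      simp only [abs_zero, zero_div, sub_zero] at hnear
      exact hab (abs_nonpos_iff.mp hnear).symm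
    rcases ha0.lt_or_gt with haneg | hapos
    · have hcond : |(-b) - (-a)| ≤ (-a) / 2 := by
        rw [show (-b) - (-a) = -(b - a) by ring, abs_neg]
        rw [abs_of_neg haneg] at hnear
        linarith
      have hreg := (near_bounds hp (by linarith : (0:ℝ) < -a) hcond).1
      rw [F_neg, K_neg] at hreg
      calc c * K p a b ≤ p * (p - 1) / 2 * 3 ^ (-|p - 2|) * K p a b :=
            mul_le_mul_of_nonneg_right hc1 hKn
        _ ≤ F p a b := hreg
    · rw [abs_of_pos hapos] at hnear
      have hreg := (near_bounds hp hapos hnear).1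
      calc c * K p a b ≤ p * (p - 1) / 2 * 3 ^ (-|p - 2|) * K p a b :=
            mul_le_mul_of_nonneg_right hc1 hKn
        _ ≤ F p a b := hreg
  · push_neg at hnear
    have hfar : |a| < 2 * |b - a| := by linarith
    by_cases h0 : min a b ≤ 0 ∧ 0 ≤ max a b
    · have hreg := far_zero_lower hp hab h0.1 h0.2
      calc c * K p a b ≤ min (p - 1) 1 / 4 * K p a b := mul_le_mul_of_nonneg_right hc2 hKn
        _ ≤ F p a b := hreg
    · have h0' : 0 < min a b ∨ max a b < 0 := by
        by_contra hcon
        push_neg at hcon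
        exact h0 ⟨hcon.1, hcon.2⟩
      rcases h0' with hpos | hneg
      · have ha : 0 < a := lt_of_lt_of_le hpos (min_le_left _ _)
        have hb : 0 < b := lt_of_lt_of_le hpos (min_le_right _ _)
        have hreg := far_pos_lower hp ha hb (by rwa [abs_of_pos ha] at hfar)
        calc c * K p a b ≤ p * (p - 1) / 8 * 2 ^ (-|p - 2|) * K p a b :=
              mul_le_mul_of_nonneg_right hc3 hKn
          _ ≤ F p a b := hreg
      · have ha : a < 0 := lt_of_le_of_lt (le_max_left a b) hneg
        have hb : b < 0 := lt_of_le_of_lt (le_max_right a b) hneg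
        have hcond : (-a) < 2 * |(-b) - (-a)| := by
          rw [show (-b) - (-a) = -(b - a) by ring, abs_neg]
          rw [abs_of_neg ha] at hfar
          linarith
        have hreg := far_pos_lower hp (by linarith : (0:ℝ) < -a) (by linarith : (0:ℝ) < -b) hcond
        rw [F_neg, K_neg] at hreg
        calc c * K p a b ≤ p * (p - 1) / 8 * 2 ^ (-|p - 2|) * K p a b :=
              mul_le_mul_of_nonneg_right hc3 hKn
          _ ≤ F p a b := hreg

lemma upper_main {p : ℝ} (hp : 1 < p) (a b : ℝ) :
    F p a b ≤ max (p * (p - 1) / 2 * 3 ^ (|p - 2|))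
      (((3:ℝ) ^ p + 2 ^ p + p * 2 ^ (p - 1)) * 3 ^ (|p - 2|)) * K p a b := by
  set C := max (p * (p - 1) / 2 * 3 ^ (|p - 2|))
      (((3:ℝ) ^ p + 2 ^ p + p * 2 ^ (p - 1)) * 3 ^ (|p - 2|)) with hCdef
  have hKn : 0 ≤ K p a b := K_nonneg p a b
  have hC1 : p * (p - 1) / 2 * 3 ^ (|p - 2|) ≤ C := le_max_left _ _
  have hC2 : ((3:ℝ) ^ p + 2 ^ p + p * 2 ^ (p - 1)) * 3 ^ (|p - 2|) ≤ C := le_max_right _ _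
  rcases eq_or_ne a b with rfl | hab
  · have hF : F p a a = 0 := by simp [F]
    have hK : K p a a = 0 := by simp [K]
    rw [hF, hK, mul_zero]
  by_cases hnear : |b - a| ≤ |a| / 2
  · have ha0 : a ≠ 0 := by
      rintro rfl
      simp only [abs_zero, zero_div, sub_zero] at hnear
      exact hab (abs_nonpos_iff.mp hnear).symm
    rcases ha0.lt_or_gt with haneg | hapos
    · have hcond : |(-b) - (-a)| ≤ (-a) / 2 := by
        rw [show (-b) - (-a) = -(b - a) by ring, abs_neg]
        rw [abs_of_neg haneg] at hnear
        linarith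
      have hreg := (near_bounds hp (by linarith : (0:ℝ) < -a) hcond).2
      rw [F_neg, K_neg] at hreg
      calc F p a b ≤ p * (p - 1) / 2 * 3 ^ (|p - 2|) * K p a b := hreg
        _ ≤ C * K p a b := mul_le_mul_of_nonneg_right hC1 hKn
    · rw [abs_of_pos hapos] at hnear
      have hreg := (near_bounds hp hapos hnear).2
      calc F p a b ≤ p * (p - 1) / 2 * 3 ^ (|p - 2|) * K p a b := hreg
        _ ≤ C * K p a b := mul_le_mul_of_nonneg_right hC1 hKn
  · push_neg at hnear
    have hfar : |a| < 2 * |b - a| := by linarith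
    have hreg := far_upper hp hfar
    calc F p a b ≤ ((3:ℝ) ^ p + 2 ^ p + p * 2 ^ (p - 1)) * 3 ^ (|p - 2|) * K p a b := hreg
      _ ≤ C * K p a b := mul_le_mul_of_nonneg_right hC2 hKn

/-- For `p > 1` there exist positive constants `c_p, C_p`, depending only
on `p`, such that `c_p K(a,b;p) ≤ F(a,b;p) ≤ C_p K(a,b;p)` for all real `a, b`. -/
theorem F_comparable_K (p : ℝ) (hp : 1 < p) :
    ∃ c C : ℝ, 0 < c ∧ 0 < C ∧
      ∀ a b : ℝ, c * K p a b ≤ F p a b ∧ F p a b ≤ C * K p a b := by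
  refine ⟨min (p * (p - 1) / 2 * 3 ^ (-|p - 2|))
      (min (min (p - 1) 1 / 4) (p * (p - 1) / 8 * 2 ^ (-|p - 2|))),
    max (p * (p - 1) / 2 * 3 ^ (|p - 2|))
      (((3:ℝ) ^ p + 2 ^ p + p * 2 ^ (p - 1)) * 3 ^ (|p - 2|)), ?_, ?_, ?_⟩
  · have u1 : (0:ℝ) < (3:ℝ) ^ (-|p - 2|) := Real.rpow_pos_of_pos (by norm_num) _
    have u2 : (0:ℝ) < (2:ℝ) ^ (-|p - 2|) := Real.rpow_pos_of_pos (by norm_num) _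
    have hpp : (0:ℝ) < p * (p - 1) := by nlinarith
    apply lt_min
    · positivity
    · apply lt_min
      · have : (0:ℝ) < min (p - 1) 1 := lt_min (by linarith) one_pos
        linarith
      · positivity
  · have u1 : (0:ℝ) < (3:ℝ) ^ (|p - 2|) := Real.rpow_pos_of_pos (by norm_num) _
    have hpp : (0:ℝ) < p * (p - 1) := by nlinarith
    apply lt_max_of_lt_left
    positivity
  · intro a b
    exact ⟨lower_main hp a b, upper_main hp a b⟩
end

section
/- Let 1 < p < 2. Then for every ε > 0 and all a, b ∈ ℝ one has 0 ≤ F_ε(a,b;p) ≤ (1/(p−1)) F(a,b;p). -/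
open Real

section Aux
open Set Filter

lemma sq_rpow_half' (x r : ℝ) : (x ^ 2) ^ (r / 2) = |x| ^ r := by
  rw [← sq_abs, ← Real.rpow_natCast |x| 2, ← Real.rpow_mul (abs_nonneg x)]
  norm_num
  congr 1
  ring

lemma mvt_tangent' {G g : ℝ → ℝ} (hG : ∀ x, HasDerivAt G (g x) x)
    (hg : Monotone g) (a b : ℝ) : g a * (b - a) ≤ G b - G a := by
  rcases lt_trichotomy a b with hab | rfl | hab
  · obtain ⟨c, hc, hc2⟩ := exists_hasDerivAt_eq_slope G g hab
      (fun x _ => (hG x).continuousAt.continuousWithinAt) (fun x _ => hG x)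
    have h1 : g a ≤ g c := hg hc.1.le
    have hba : (0:ℝ) < b - a := by linarith
    have h2 : G b - G a = g c * (b - a) := by
      field_simp at hc2; linarith [hc2]
    nlinarith
  · simp
  · obtain ⟨c, hc, hc2⟩ := exists_hasDerivAt_eq_slope G g hab
      (fun x _ => (hG x).continuousAt.continuousWithinAt) (fun x _ => hG x)
    have h1 : g c ≤ g a := hg hc.2.le
    have hba : (0:ℝ) < a - b := by linarith
    have h2 : G a - G b = g c * (a - b) := by
      field_simp at hc2; linarith [hc2]
    nlinarith

lemma derivPhi' (p e : ℝ) (he : 0 < e) (x : ℝ) :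
    HasDerivAt (fun x : ℝ => (x ^ 2 + e ^ 2) ^ (p / 2))
      (p * x * (x ^ 2 + e ^ 2) ^ ((p - 2) / 2)) x := by
  have hu : HasDerivAt (fun x : ℝ => x ^ 2 + e ^ 2) (2 * x) x := by
    simpa using (hasDerivAt_pow 2 x).add_const (e ^ 2)
  have hpos : 0 < x ^ 2 + e ^ 2 := by positivity
  have h := hu.rpow_const (p := p / 2) (Or.inl hpos.ne')
  convert h using 1
  rw [show p / 2 - 1 = (p - 2) / 2 by ring]
  ring

lemma derivPhiD' (p e : ℝ) (he : 0 < e) (x : ℝ) :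
    HasDerivAt (fun x : ℝ => p * x * (x ^ 2 + e ^ 2) ^ ((p - 2) / 2))
      (p * ((p - 1) * x ^ 2 + e ^ 2) * (x ^ 2 + e ^ 2) ^ ((p - 4) / 2)) x := by
  have hu : HasDerivAt (fun x : ℝ => x ^ 2 + e ^ 2) (2 * x) x := by
    simpa using (hasDerivAt_pow 2 x).add_const (e ^ 2)
  have hpos : 0 < x ^ 2 + e ^ 2 := by positivity
  have h1 := hu.rpow_const (p := (p - 2) / 2) (Or.inl hpos.ne')
  have h2 : HasDerivAt (fun x : ℝ => p * x) p x := by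
    simpa using (hasDerivAt_id x).const_mul p
  have h3 : HasDerivAt (fun y : ℝ => p * y * (y ^ 2 + e ^ 2) ^ ((p - 2) / 2)) _ x := h2.mul h1
  convert h3 using 1
  rw [show (p - 2) / 2 - 1 = (p - 4) / 2 by ring,
      show (p - 2) / 2 = 1 + (p - 4) / 2 by ring, Real.rpow_add hpos, Real.rpow_one]
  ring

lemma monoPhi' (p e : ℝ) (hp1 : 1 < p) (he : 0 < e) :
    Monotone (fun x : ℝ => p * x * (x ^ 2 + e ^ 2) ^ ((p - 2) / 2)) := by
  apply monotone_of_deriv_nonneg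
  · exact fun x => (derivPhiD' p e he x).differentiableAt
  · intro x
    rw [(derivPhiD' p e he x).deriv]
    have hpos : 0 < x ^ 2 + e ^ 2 := by positivity
    have h1 : 0 < (x ^ 2 + e ^ 2) ^ ((p - 4) / 2) := Real.rpow_pos_of_pos hpos _
    have h2 : 0 < (p - 1) * x ^ 2 + e ^ 2 := by nlinarith [sq_nonneg x]
    exact (mul_pos (mul_pos (by linarith : (0:ℝ) < p) h2) h1).le

lemma derivPsi' (p : ℝ) (hp1 : 1 < p) (x : ℝ) :
    HasDerivAt (fun x : ℝ => (x ^ 2) ^ (p / 2)) (p * x * (x ^ 2) ^ ((p - 2) / 2)) x := by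
  rcases eq_or_ne x 0 with rfl | hx
  · have h0 : p * (0:ℝ) * ((0:ℝ) ^ 2) ^ ((p - 2) / 2) = 0 := by ring
    rw [h0, hasDerivAt_iff_tendsto_slope]
    apply squeeze_zero_norm (a := fun y : ℝ => |y| ^ (p - 1))
    · intro y
      rcases eq_or_ne y 0 with rfl | hy
      · simp only [slope_same, norm_zero]
        exact Real.rpow_nonneg (abs_nonneg 0) _
      · have hay : 0 < |y| := abs_pos.2 hy
        have hsl : slope (fun x : ℝ => (x ^ 2) ^ (p / 2)) 0 y = y⁻¹ * (y ^ 2) ^ (p / 2) := by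
          simp [slope, Real.zero_rpow (by positivity : p / 2 ≠ 0)]
        rw [hsl, sq_rpow_half' y p, norm_mul, norm_inv, Real.norm_eq_abs, Real.norm_eq_abs,
          abs_of_nonneg (Real.rpow_nonneg (abs_nonneg y) p),
          Real.rpow_sub hay, Real.rpow_one, inv_mul_eq_div]
    · have hc : ContinuousAt (fun y : ℝ => |y| ^ (p - 1)) 0 := by
        have h1 : ContinuousAt (fun t : ℝ => t ^ (p - 1)) (|0| : ℝ) := by
          simpa using Real.continuousAt_rpow_const 0 (p - 1) (Or.inr (by linarith))
        exact h1.comp continuous_abs.continuousAt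
      have := hc.tendsto
      simp only [abs_zero, Real.zero_rpow (show p - 1 ≠ 0 by linarith)] at this
      exact this.mono_left nhdsWithin_le_nhds
  · have hu : HasDerivAt (fun x : ℝ => x ^ 2) (2 * x) x := by
      simpa using hasDerivAt_pow 2 x
    have hx2 : x ^ 2 ≠ 0 := pow_ne_zero 2 hx
    have h := hu.rpow_const (p := p / 2) (Or.inl hx2)
    convert h using 1
    rw [show p / 2 - 1 = (p - 2) / 2 by ring]
    ring

lemma derivK' (p : ℝ) {x : ℝ} (hx : x ≠ 0) :
    HasDerivAt (fun x : ℝ => p * x * (x ^ 2) ^ ((p - 2) / 2))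
      (p * (p - 1) * (x ^ 2) ^ ((p - 2) / 2)) x := by
  have hu : HasDerivAt (fun x : ℝ => x ^ 2) (2 * x) x := by
    simpa using hasDerivAt_pow 2 x
  have hx2 : 0 < x ^ 2 := pow_two_pos_of_ne_zero hx
  have h1 := hu.rpow_const (p := (p - 2) / 2) (Or.inl hx2.ne')
  have h2 : HasDerivAt (fun x : ℝ => p * x) p x := by
    simpa using (hasDerivAt_id x).const_mul p
  have h3 : HasDerivAt (fun y : ℝ => p * y * (y ^ 2) ^ ((p - 2) / 2)) _ x := h2.mul h1
  convert h3 using 1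
  rw [show (p - 2) / 2 - 1 = (p - 4) / 2 by ring,
      show (p - 2) / 2 = 1 + (p - 4) / 2 by ring, Real.rpow_add hx2, Real.rpow_one]
  ring

lemma contK (p : ℝ) (hp1 : 1 < p) :
    Continuous (fun x : ℝ => p * x * (x ^ 2) ^ ((p - 2) / 2)) := by
  rw [continuous_iff_continuousAt]
  intro x
  rcases eq_or_ne x 0 with rfl | hx
  · have hval : p * (0:ℝ) * ((0:ℝ) ^ 2) ^ ((p - 2) / 2) = 0 := by ring
    suffices htend : Tendsto (fun x : ℝ => p * x * (x ^ 2) ^ ((p - 2) / 2)) (nhds 0) (nhds 0) by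
      simpa [ContinuousAt, hval] using htend
    apply squeeze_zero_norm (a := fun y : ℝ => |p| * |y| ^ (p - 1))
    · intro y
      rcases eq_or_ne y 0 with rfl | hy
      · simp only [mul_zero, zero_mul, norm_zero]
        positivity
      · have hay : 0 < |y| := abs_pos.2 hy
        rw [sq_rpow_half' y (p - 2), norm_mul, norm_mul, Real.norm_eq_abs, Real.norm_eq_abs,
          Real.norm_eq_abs, abs_of_nonneg (Real.rpow_nonneg (abs_nonneg y) _),
          show p - 1 = 1 + (p - 2) by ring, Real.rpow_add hay, Real.rpow_one]
        apply le_of_eq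
        ring
    · have hc : ContinuousAt (fun y : ℝ => |y| ^ (p - 1)) 0 := by
        have h1 : ContinuousAt (fun t : ℝ => t ^ (p - 1)) (|0| : ℝ) := by
          simpa using Real.continuousAt_rpow_const 0 (p - 1) (Or.inr (by linarith))
        exact h1.comp continuous_abs.continuousAt
      have := (hc.tendsto).const_mul |p|
      simp only [abs_zero, Real.zero_rpow (show p - 1 ≠ 0 by linarith), mul_zero] at this
      exact this
  · have hx2 : x ^ 2 ≠ 0 := pow_ne_zero 2 hx
    have h1 : ContinuousAt (fun t : ℝ => t ^ ((p - 2) / 2)) (x ^ 2) :=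
      Real.continuousAt_rpow_const (x ^ 2) _ (Or.inl hx2)
    exact (continuousAt_const.mul continuousAt_id).mul
      (ContinuousAt.comp (g := fun t : ℝ => t ^ ((p - 2) / 2)) h1 ((continuous_pow 2).continuousAt))

lemma monoH' (p e : ℝ) (hp1 : 1 < p) (hp2 : p < 2) (he : 0 < e) :
    Monotone (fun x : ℝ =>
      1 / (p - 1) * (p * x * (x ^ 2) ^ ((p - 2) / 2)) - p * x * (x ^ 2 + e ^ 2) ^ ((p - 2) / 2)) := by
  set h : ℝ → ℝ := fun x =>
    1 / (p - 1) * (p * x * (x ^ 2) ^ ((p - 2) / 2)) - p * x * (x ^ 2 + e ^ 2) ^ ((p - 2) / 2)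
    with hh
  have hcont : Continuous h := by
    apply Continuous.sub
    · exact continuous_const.mul (contK p hp1)
    · exact Differentiable.continuous (fun x => (derivPhiD' p e he x).differentiableAt)
  have hIci : MonotoneOn h (Ici (0:ℝ)) := by
    apply monotoneOn_of_deriv_nonneg (convex_Ici 0) hcont.continuousOn
    · intro x hx
      rw [interior_Ici] at hx
      exact (((derivK' p (ne_of_gt hx)).const_mul _).sub
        (derivPhiD' p e he x)).differentiableAt.differentiableWithinAt
    · intro x hx
      rw [interior_Ici] at hx
      have hd := ((derivK' p (ne_of_gt hx)).const_mul (1 / (p - 1))).sub (derivPhiD' p e he x)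
      rw [show deriv h x = _ from hd.deriv]
      have hx2 : 0 < x ^ 2 := pow_two_pos_of_ne_zero (ne_of_gt hx)
      have hpos : 0 < x ^ 2 + e ^ 2 := by positivity
      have hw : 0 ≤ (x ^ 2 + e ^ 2) ^ ((p - 4) / 2) := (Real.rpow_pos_of_pos hpos _).le
      have hA : (x ^ 2 + e ^ 2) ^ ((p - 2) / 2) ≤ (x ^ 2) ^ ((p - 2) / 2) :=
        Real.rpow_le_rpow_of_nonpos hx2 (by nlinarith [sq_nonneg e]) (by linarith)
      have hB : ((p - 1) * x ^ 2 + e ^ 2) * (x ^ 2 + e ^ 2) ^ ((p - 4) / 2)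
          ≤ (x ^ 2 + e ^ 2) * (x ^ 2 + e ^ 2) ^ ((p - 4) / 2) := by
        apply mul_le_mul_of_nonneg_right _ hw
        nlinarith [sq_nonneg x]
      have hC : (x ^ 2 + e ^ 2) * (x ^ 2 + e ^ 2) ^ ((p - 4) / 2)
          = (x ^ 2 + e ^ 2) ^ ((p - 2) / 2) := by
        rw [show (p - 2) / 2 = 1 + (p - 4) / 2 by ring, Real.rpow_add hpos, Real.rpow_one]
      have hE : 1 / (p - 1) * (p * (p - 1) * (x ^ 2) ^ ((p - 2) / 2))
          = p * (x ^ 2) ^ ((p - 2) / 2) := by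
        rw [show 1 / (p - 1) * (p * (p - 1) * (x ^ 2) ^ ((p - 2) / 2))
            = (p - 1) / (p - 1) * (p * (x ^ 2) ^ ((p - 2) / 2)) by ring,
          div_self (show p - 1 ≠ 0 by linarith), one_mul]
      rw [hE]
      have hkey : ((p - 1) * x ^ 2 + e ^ 2) * (x ^ 2 + e ^ 2) ^ ((p - 4) / 2)
          ≤ (x ^ 2) ^ ((p - 2) / 2) := by
        calc ((p - 1) * x ^ 2 + e ^ 2) * (x ^ 2 + e ^ 2) ^ ((p - 4) / 2)
            ≤ (x ^ 2 + e ^ 2) * (x ^ 2 + e ^ 2) ^ ((p - 4) / 2) := hB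
          _ = (x ^ 2 + e ^ 2) ^ ((p - 2) / 2) := hC
          _ ≤ (x ^ 2) ^ ((p - 2) / 2) := hA
      have hp0 : 0 < p := by linarith
      nlinarith [hkey]
  have hodd : ∀ x : ℝ, h (-x) = - h x := by
    intro x
    simp only [hh, neg_sq]
    ring
  have h0 : h 0 = 0 := by simp [hh]
  intro x y hxy
  rcases le_total 0 x with hx | hx
  · exact hIci hx (le_trans hx hxy) hxy
  · rcases le_total y 0 with hy | hy
    · have := hIci (mem_Ici.2 (neg_nonneg.2 hy)) (mem_Ici.2 (neg_nonneg.2 (hxy.trans hy)))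
        (neg_le_neg hxy)
      rw [hodd, hodd] at this
      linarith
    · have h1 : h 0 ≤ h (-x) := hIci (mem_Ici.2 le_rfl) (mem_Ici.2 (neg_nonneg.2 hx))
        (neg_nonneg.2 hx)
      have h2 : h 0 ≤ h y := hIci (mem_Ici.2 le_rfl) (mem_Ici.2 hy) hy
      rw [hodd] at h1
      linarith


end Aux

/-- `F_ε(a,b;p) = (b²+ε²)^{p/2} − (a²+ε²)^{p/2} − p a (a²+ε²)^{(p−2)/2}(b−a)`. -/
noncomputable def Feps (p ε a b : ℝ) : ℝ :=
  (b ^ 2 + ε ^ 2) ^ (p / 2) - (a ^ 2 + ε ^ 2) ^ (p / 2)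
    - p * a * (a ^ 2 + ε ^ 2) ^ ((p - 2) / 2) * (b - a)

/-- For `1 < p < 2`, every `ε > 0` and all `a, b ∈ ℝ`,
`0 ≤ F_ε(a,b;p) ≤ (1/(p−1)) F(a,b;p)`. -/
theorem Feps_nonneg_le_F (p : ℝ) (hp1 : 1 < p) (hp2 : p < 2) (ε : ℝ) (hε : 0 < ε)
    (a b : ℝ) :
    0 ≤ Feps p ε a b ∧ Feps p ε a b ≤ (1 / (p - 1)) * F p a b := by
  have key1 := mvt_tangent' (derivPhi' p ε hε) (monoPhi' p ε hp1 hε) a b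
  constructor
  · simp only [Feps]
    linarith [key1]
  · have hG : ∀ x : ℝ, HasDerivAt (fun x : ℝ => 1 / (p - 1) * (x ^ 2) ^ (p / 2) - (x ^ 2 + ε ^ 2) ^ (p / 2))
        (1 / (p - 1) * (p * x * (x ^ 2) ^ ((p - 2) / 2)) - p * x * (x ^ 2 + ε ^ 2) ^ ((p - 2) / 2)) x :=
      fun x => ((derivPsi' p hp1 x).const_mul (1 / (p - 1))).sub (derivPhi' p ε hε x)
    have key2 := mvt_tangent' hG (monoH' p ε hp1 hp2 hε) a b
    simp only [Feps, F]
    rw [← sq_rpow_half' b p, ← sq_rpow_half' a p, ← sq_rpow_half' a (p - 2)]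
    nlinarith [key2]
end

section
/- Let ν be a Lévy measure on ℝ^d whose characteristic exponent ψ satisfies the Hartman–Wintner condition, and let (P_t) be the associated convolution semigroup. Then for every t > 0 the constant C_t := (2π)^{−d} ∫_{ℝ^d} e^{−t Re ψ(ξ)} dξ is finite, and for every 1 ≤ p < ∞ and every f ∈ L^p(ℝ^d), ‖P_t f‖_∞ ≤ C_t^{1/p} ‖f‖_p. -/
open MeasureTheory Filter RealInnerProductSpace
open scoped ENNReal

open FourierTransform Module Metric Bornology
open scoped ContDiff

lemma aux_ft_integrable {V : Type*} [NormedAddCommGroup V] [InnerProductSpace ℝ V]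
    [MeasurableSpace V] [BorelSpace V] [FiniteDimensional ℝ V]
    (Φ : V → ℂ) (h1 : ContDiff ℝ ∞ Φ) (h2 : HasCompactSupport Φ) :
    Integrable (𝓕 Φ) := by
  have hdecay : ∀ (k n : ℕ), ∃ C, ∀ x, ‖x‖ ^ k * ‖iteratedFDeriv ℝ n Φ x‖ ≤ C := by
    intro k n
    have hc : Continuous fun x => ‖x‖ ^ k * ‖iteratedFDeriv ℝ n Φ x‖ :=
      (continuous_norm.pow k).mul ((h1.continuous_iteratedFDeriv (mod_cast le_top)).norm)
    have hcs : HasCompactSupport fun x => ‖x‖ ^ k * ‖iteratedFDeriv ℝ n Φ x‖ := by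
      have := (h2.iteratedFDeriv (𝕜 := ℝ) (n := n)).norm
      exact this.mul_left
    obtain ⟨C, hC⟩ := hc.bounded_above_of_compact_support hcs
    exact ⟨C, fun x => by simpa using hC x⟩
  let Φ' : SchwartzMap V ℂ := ⟨Φ, h1, hdecay⟩
  have : 𝓕 Φ = 𝓕 (⇑Φ') := rfl
  rw [this, ← SchwartzMap.fourier_coe, ← SchwartzMap.fourierTransformCLM_apply (𝕜 := ℂ)]
  exact (SchwartzMap.fourierTransformCLM ℂ Φ').integrable

lemma aux_inversion_ae {V : Type*} [NormedAddCommGroup V] [InnerProductSpace ℝ V]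
    [MeasurableSpace V] [BorelSpace V] [FiniteDimensional ℝ V] [SecondCountableTopology V]
    (q : V → ℂ) (hq : Integrable q) (hF : Integrable (𝓕 q)) :
    ∀ᵐ x, q x = 𝓕⁻ (𝓕 q) x := by
  have h𝓕 : ∀ (h : V → ℂ), 𝓕 h = VectorFourier.fourierIntegral (Real.fourierChar) volume
      (innerₗ V) h := fun h => rfl
  have h𝓕i : ∀ (h : V → ℂ), 𝓕⁻ h = VectorFourier.fourierIntegral (Real.fourierChar) volume
      (-innerₗ V) h := fun h => rfl
  have hflip1 : (innerₗ V).flip = innerₗ V :=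
    LinearMap.ext fun x => LinearMap.ext fun y => real_inner_comm x y
  have hflip2 : (-innerₗ V).flip = -innerₗ V := by
    refine LinearMap.ext fun x => LinearMap.ext fun y => ?_
    simp [real_inner_comm x y]
  have hcont : Continuous (𝓕⁻ (𝓕 q)) := by
    rw [h𝓕i]
    exact VectorFourier.fourierIntegral_continuous Real.continuous_fourierChar
      (by exact continuous_inner.neg) hF
  refine ae_eq_of_integral_contDiff_smul_eq hq.locallyIntegrable hcont.locallyIntegrable ?_
  intro φ hφ hφc
  set Φ : V → ℂ := fun x => (φ x : ℂ) with hΦdef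
  have hΦc : HasCompactSupport Φ := hφc.comp_left Complex.ofReal_zero
  have hΦd : ContDiff ℝ ∞ Φ := Complex.ofRealCLM.contDiff.comp hφ
  have hΦint : Integrable Φ := hΦd.continuous.integrable_of_hasCompactSupport hΦc
  have hFΦint : Integrable (𝓕 Φ) := aux_ft_integrable Φ hΦd hΦc
  have hFΦinv_int : Integrable (𝓕⁻ Φ) := by
    have h1 : Integrable (fun v => 𝓕 Φ ((-1 : ℝ) • v)) := hFΦint.comp_smul (by norm_num)
    refine h1.congr (Eventually.of_forall fun v => ?_)
    rw [Real.fourierInv_eq_fourier_neg]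
    simp
  have hinv : 𝓕 (𝓕⁻ Φ) = Φ := hΦd.continuous.fourier_fourierInv_eq hΦint hFΦint
  have flip1 := VectorFourier.integral_fourierIntegral_smul_eq_flip (L := innerₗ V)
    Real.continuous_fourierChar continuous_inner hq hFΦinv_int
  rw [hflip1] at flip1
  have flip2 := VectorFourier.integral_fourierIntegral_smul_eq_flip (L := -innerₗ V)
    Real.continuous_fourierChar (by exact continuous_inner.neg) hΦint hF
  rw [hflip2] at flip2
  calc ∫ x, φ x • q x = ∫ x, q x • (𝓕 (𝓕⁻ Φ)) x := by
        rw [hinv]; congr 1; funext x; simp [Φ, Complex.real_smul, smul_eq_mul, mul_comm]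
    _ = ∫ ξ, (𝓕 q) ξ • (𝓕⁻ Φ) ξ := flip1.symm
    _ = ∫ ξ, (𝓕⁻ Φ) ξ • (𝓕 q) ξ := by simp only [smul_eq_mul, mul_comm]
    _ = ∫ x, Φ x • (𝓕⁻ (𝓕 q)) x := flip2
    _ = ∫ x, φ x • (𝓕⁻ (𝓕 q)) x := by
        congr 1
  rfl

/-- **Ultracontractivity.** Let `ν` be a Lévy measure on `ℝ^d` whose
characteristic exponent `ψ` satisfies the Hartman–Wintner condition, and let `(P_t)`
be the associated convolution semigroup.  For every `t > 0` the constant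
`C_t = (2π)^{−d} ∫ e^{−t Re ψ(ξ)} dξ` is finite (i.e. the integrand is integrable),
and for every `1 ≤ p < ∞` and `f ∈ L^p(ℝ^d)`, `‖P_t f‖_∞ ≤ C_t^{1/p} ‖f‖_p`. -/
theorem ultracontractivity (d : ℕ)
    (ν : Measure (EuclideanSpace ℝ (Fin d)))
    (hν0 : ν {0} = 0)
    (hνint : ∫⁻ y, ENNReal.ofReal (min 1 (‖y‖ ^ 2)) ∂ν < ⊤)
    (ψ : EuclideanSpace ℝ (Fin d) → ℂ)
    (hψ : ∀ ξ, ψ ξ = ∫ y, (1 - Complex.exp (Complex.I * (⟪ξ, y⟫ : ℂ))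
      + Complex.I * (⟪ξ, y⟫ : ℂ) * (if ‖y‖ < 1 then 1 else 0)) ∂ν)
    (hHW : Tendsto (fun ξ => (ψ ξ).re / Real.log (1 + ‖ξ‖)) (cocompact _) atTop)
    (pker : ℝ → EuclideanSpace ℝ (Fin d) → ℝ)
    (hker_int : ∀ t > (0 : ℝ), Integrable (pker t))
    (hker_nonneg : ∀ t > (0 : ℝ), ∀ x, 0 ≤ pker t x)
    (hker_mass : ∀ t > (0 : ℝ), ∫ x, pker t x = 1)
    (hker_ft : ∀ t > (0 : ℝ), ∀ ξ,
      ∫ x, Complex.exp (Complex.I * (⟪ξ, x⟫ : ℂ)) * (pker t x : ℂ)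
        = Complex.exp (-(t : ℂ) * ψ ξ))
    (P : ℝ → (EuclideanSpace ℝ (Fin d) → ℝ) → EuclideanSpace ℝ (Fin d) → ℝ)
    (hP : ∀ t f x, P t f x = ∫ z, f (x + z) * pker t z)
    (t : ℝ) (ht : 0 < t) :
    Integrable (fun ξ : EuclideanSpace ℝ (Fin d) => Real.exp (-t * (ψ ξ).re)) ∧
      ∀ p : ℝ, 1 ≤ p →
        ∀ f : EuclideanSpace ℝ (Fin d) → ℝ, MemLp f (ENNReal.ofReal p) →
          eLpNorm (P t f) ⊤ volume
            ≤ ENNReal.ofReal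
                (((2 * Real.pi) ^ (-(d : ℝ))
                    * ∫ ξ, Real.exp (-t * (ψ ξ).re)) ^ (1 / p))
              * eLpNorm f (ENNReal.ofReal p) volume := by
  clear hν0 hνint hψ
  set pt : EuclideanSpace ℝ (Fin d) → ℝ := pker t with hptdef
  have hpt : Integrable pt := hker_int t ht
  set q : EuclideanSpace ℝ (Fin d) → ℂ := fun x => (pt x : ℂ) with hqdef
  have hq : Integrable q := hpt.ofReal
  set E' : EuclideanSpace ℝ (Fin d) → ℝ := fun u => Real.exp (-t * (ψ u).re) with hE'def
  have hπ : (0:ℝ) < 2 * Real.pi := by positivity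
  have hπne : (-(2 * Real.pi) : ℝ) ≠ 0 := neg_ne_zero.mpr (by positivity)
  -- Fourier transform of the kernel
  have hG : ∀ ξ : EuclideanSpace ℝ (Fin d), 𝓕 q ξ = Complex.exp (-(t:ℂ) * ψ ((-(2 * Real.pi)) • ξ)) := by
    intro ξ
    rw [← hker_ft t ht ((-(2 * Real.pi)) • ξ), Real.fourier_eq']
    congr 1
    funext x
    rw [smul_eq_mul]
    congr 1
    rw [real_inner_smul_left, real_inner_comm ξ x]
    push_cast
    ring_nf
  have hGnorm : ∀ ξ : EuclideanSpace ℝ (Fin d), ‖𝓕 q ξ‖ = E' ((-(2 * Real.pi)) • ξ) := by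
    intro ξ
    rw [hG ξ, Complex.norm_exp, hE'def]
    congr 1
    simp [Complex.mul_re]
  -- Hartman–Wintner decay
  obtain ⟨K, hK, hKs⟩ : ∃ K : Set (EuclideanSpace ℝ (Fin d)), IsCompact K ∧
      Kᶜ ⊆ {ξ | ((d:ℝ)+1)/t ≤ (ψ ξ).re / Real.log (1+‖ξ‖)} := by
    have h1 : ∀ᶠ ξ in cocompact (EuclideanSpace ℝ (Fin d)),
        ((d:ℝ)+1)/t ≤ (ψ ξ).re / Real.log (1+‖ξ‖) := hHW.eventually_ge_atTop _
    rw [Filter.eventually_iff, Filter.mem_cocompact] at h1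
    exact h1
  obtain ⟨R₀, hR₀⟩ := hK.isBounded.subset_closedBall (0 : EuclideanSpace ℝ (Fin d))
  set R := max R₀ 1 with hRdef
  have hR1 : (1:ℝ) ≤ R := le_max_right _ _
  have hRprop : ∀ ξ, R < ‖ξ‖ → ((d:ℝ)+1)/t ≤ (ψ ξ).re / Real.log (1+‖ξ‖) := by
    intro ξ hξ
    refine hKs ?_
    intro hmem
    have h2 := hR₀ hmem
    rw [mem_closedBall_zero_iff] at h2
    have h3 : ‖ξ‖ ≤ R := h2.trans (le_max_left _ _)
    linarith
  have hEbound : ∀ ξ : EuclideanSpace ℝ (Fin d), R < ‖ξ‖ →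
      E' ξ ≤ (1+‖ξ‖) ^ (-((d:ℝ)+1)) := by
    intro ξ hξ
    have h2 : (1:ℝ) < 1 + ‖ξ‖ := by linarith
    have hlog : 0 < Real.log (1+‖ξ‖) := Real.log_pos h2
    have h3 : ((d:ℝ)+1)/t * Real.log (1+‖ξ‖) ≤ (ψ ξ).re := by
      calc ((d:ℝ)+1)/t * Real.log (1+‖ξ‖)
          ≤ (ψ ξ).re / Real.log (1+‖ξ‖) * Real.log (1+‖ξ‖) :=
            mul_le_mul_of_nonneg_right (hRprop ξ hξ) hlog.le
        _ = (ψ ξ).re := div_mul_cancel₀ _ hlog.ne'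
    have h4 : -t * (ψ ξ).re ≤ -((d:ℝ)+1) * Real.log (1+‖ξ‖) := by
      have h5 : t * (((d:ℝ)+1)/t * Real.log (1+‖ξ‖)) ≤ t * (ψ ξ).re :=
        mul_le_mul_of_nonneg_left h3 ht.le
      have h6 : t * (((d:ℝ)+1)/t * Real.log (1+‖ξ‖)) = ((d:ℝ)+1) * Real.log (1+‖ξ‖) := by
        field_simp
      linarith
    calc E' ξ ≤ Real.exp (-((d:ℝ)+1) * Real.log (1+‖ξ‖)) := Real.exp_le_exp.mpr h4
      _ = (1+‖ξ‖) ^ (-((d:ℝ)+1)) := by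
          rw [Real.rpow_def_of_pos (by linarith), mul_comm]
  have hcont : Continuous (𝓕 q) :=
    VectorFourier.fourierIntegral_continuous Real.continuous_fourierChar continuous_inner hq
  have h2π1 : (1:ℝ) ≤ 2*Real.pi := by nlinarith [Real.pi_gt_three]
  have hFdecay : ∀ ξ : EuclideanSpace ℝ (Fin d), R < ‖ξ‖ →
      ‖𝓕 q ξ‖ ≤ (1+‖ξ‖) ^ (-((d:ℝ)+1)) := by
    intro ξ hξ
    rw [hGnorm ξ]
    have hnorm : ‖(-(2*Real.pi)) • ξ‖ = (2*Real.pi) * ‖ξ‖ := by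
      rw [norm_smul, Real.norm_eq_abs, abs_neg, abs_of_pos hπ]
    have hbig : R < ‖(-(2*Real.pi)) • ξ‖ := by
      rw [hnorm]; nlinarith [norm_nonneg ξ]
    calc E' ((-(2*Real.pi)) • ξ) ≤ (1+‖(-(2*Real.pi)) • ξ‖) ^ (-((d:ℝ)+1)) := hEbound _ hbig
      _ ≤ (1+‖ξ‖) ^ (-((d:ℝ)+1)) := by
          refine Real.rpow_le_rpow_of_nonpos (by positivity) ?_ (by linarith)
          rw [hnorm]; nlinarith [norm_nonneg ξ]
  obtain ⟨C₀, hC₀⟩ :=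
    (isCompact_closedBall (0 : EuclideanSpace ℝ (Fin d)) R).exists_bound_of_continuousOn
      hcont.continuousOn
  have hC₀0 : 0 ≤ C₀ :=
    (norm_nonneg (𝓕 q 0)).trans (hC₀ 0 (mem_closedBall_self (by linarith)))
  set C₁ := max (C₀ * (1+R) ^ ((d:ℝ)+1)) 1 with hC₁def
  have hC₁0 : (0:ℝ) ≤ C₁ := le_trans zero_le_one (le_max_right _ _)
  have hC₁ : ∀ ξ, ‖𝓕 q ξ‖ ≤ C₁ * (1+‖ξ‖) ^ (-((d:ℝ)+1)) := by
    intro ξ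
    rcases le_or_gt ‖ξ‖ R with hle | hlt
    · have e1 : ‖𝓕 q ξ‖ ≤ C₀ := hC₀ ξ (mem_closedBall_zero_iff.mpr hle)
      have e2 : (1+R) ^ ((d:ℝ)+1) * (1+R) ^ (-((d:ℝ)+1)) = 1 := by
        have e3 : ((d:ℝ) + 1) + (-((d:ℝ)+1)) = (0:ℝ) := by ring
        rw [← Real.rpow_add (by linarith), e3, Real.rpow_zero]
      calc ‖𝓕 q ξ‖ ≤ C₀ := e1
        _ = (C₀ * (1+R) ^ ((d:ℝ)+1)) * (1+R) ^ (-((d:ℝ)+1)) := by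
            rw [mul_assoc, e2, mul_one]
        _ ≤ C₁ * (1+‖ξ‖) ^ (-((d:ℝ)+1)) := by
            refine mul_le_mul (le_max_left _ _) ?_ (by positivity) hC₁0
            exact Real.rpow_le_rpow_of_nonpos (by positivity) (by linarith) (by linarith)
    · calc ‖𝓕 q ξ‖ ≤ (1+‖ξ‖) ^ (-((d:ℝ)+1)) := hFdecay ξ hlt
        _ ≤ C₁ * (1+‖ξ‖) ^ (-((d:ℝ)+1)) := by
            nth_rewrite 1 [← one_mul ((1+‖ξ‖) ^ (-((d:ℝ)+1)))]
            exact mul_le_mul_of_nonneg_right (le_max_right _ _) (by positivity)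
  have hint0 : Integrable (fun ξ : EuclideanSpace ℝ (Fin d) => (1+‖ξ‖) ^ (-((d:ℝ)+1))) := by
    refine integrable_one_add_norm ?_
    rw [finrank_euclideanSpace_fin]
    exact lt_add_one _
  have hFq_int : Integrable (𝓕 q) :=
    (hint0.const_mul C₁).mono' hcont.aestronglyMeasurable (Eventually.of_forall hC₁)
  have hsmul_cancel : ∀ u : EuclideanSpace ℝ (Fin d),
      (-(2*Real.pi)) • ((-(2*Real.pi))⁻¹ • u) = u := by
    intro u; rw [smul_smul, mul_inv_cancel₀ hπne, one_smul]
  have hE'int : Integrable E' := by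
    have h2 : Integrable (fun u : EuclideanSpace ℝ (Fin d) => ‖𝓕 q (((-(2*Real.pi))⁻¹) • u)‖) :=
      hFq_int.norm.comp_smul (inv_ne_zero hπne)
    refine h2.congr (Eventually.of_forall fun u => ?_)
    show ‖𝓕 q (((-(2*Real.pi))⁻¹) • u)‖ = E' u
    rw [hGnorm, hsmul_cancel]
  refine ⟨hE'int, ?_⟩
  have hMeq : ∫ ξ, ‖𝓕 q ξ‖ = (2*Real.pi) ^ (-(d:ℝ)) * ∫ u, E' u := by
    have h1 : ∫ ξ, ‖𝓕 q ξ‖ = ∫ ξ, E' ((-(2*Real.pi)) • ξ) := by simp only [hGnorm]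
    rw [h1, MeasureTheory.Measure.integral_comp_smul volume E' (-(2*Real.pi)), smul_eq_mul]
    congr 1
    rw [finrank_euclideanSpace_fin, abs_inv, abs_pow, abs_neg, abs_of_pos hπ,
      Real.rpow_neg hπ.le, Real.rpow_natCast]
  set M := (2*Real.pi) ^ (-(d:ℝ)) * ∫ u, E' u with hMdef
  have hM0 : 0 ≤ M := by
    refine mul_nonneg (Real.rpow_nonneg hπ.le _) (integral_nonneg fun u => (Real.exp_pos _).le)
  have haeeq := aux_inversion_ae q hq hFq_int
  have hgle : ∀ x, ‖𝓕⁻ (𝓕 q) x‖ ≤ M := by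
    intro x
    calc ‖𝓕⁻ (𝓕 q) x‖ ≤ ∫ ξ, ‖𝓕 q ξ‖ :=
          VectorFourier.norm_fourierIntegral_le_integral_norm _ _ _ _ _
      _ = M := hMeq
  have hptle : ∀ᵐ x : EuclideanSpace ℝ (Fin d), pt x ≤ M := by
    filter_upwards [haeeq] with x hx
    have h1 : pt x = (q x).re := rfl
    rw [h1, hx]
    calc (𝓕⁻ (𝓕 q) x).re ≤ ‖𝓕⁻ (𝓕 q) x‖ := Complex.re_le_norm _
      _ = ‖𝓕⁻ (𝓕 q) x‖ := rfl
      _ ≤ M := hgle x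
  -- Part 3: the operator bound
  intro p hp1 f hf
  have hp0 : (0:ℝ) < p := lt_of_lt_of_le one_pos hp1
  set N := eLpNorm f (ENNReal.ofReal p) volume with hNdef
  have hfm : AEStronglyMeasurable f volume := hf.1
  have hptnn : ∀ z, 0 ≤ pt z := hker_nonneg t ht
  have hnnofReal : ∀ z, (‖pt z‖₊ : ℝ≥0∞) = ENNReal.ofReal (pt z) := by
    intro z
    rw [← enorm_eq_nnnorm, ← ofReal_norm, Real.norm_eq_abs, abs_of_nonneg (hptnn z)]
  have hptlint : ∫⁻ z, (‖pt z‖₊ : ℝ≥0∞) = 1 := by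
    simp only [hnnofReal]
    rw [← MeasureTheory.ofReal_integral_eq_lintegral_ofReal hpt (Eventually.of_forall hptnn),
      hker_mass t ht, ENNReal.ofReal_one]
  have hptenn : ∀ᵐ z : EuclideanSpace ℝ (Fin d), (‖pt z‖₊ : ℝ≥0∞) ≤ ENNReal.ofReal M := by
    filter_upwards [hptle] with z hz
    rw [hnnofReal z]
    exact ENNReal.ofReal_le_ofReal hz
  have key : ∀ x : EuclideanSpace ℝ (Fin d),
      (‖P t f x‖₊ : ℝ≥0∞) ≤ ENNReal.ofReal (M ^ (1/p)) * N := by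
    intro x
    have hfx : AEStronglyMeasurable (fun z => f (x + z)) volume :=
      hfm.comp_quasiMeasurePreserving
        (measurePreserving_add_left volume x).quasiMeasurePreserving
    have step1 : (‖P t f x‖₊ : ℝ≥0∞) ≤ ∫⁻ z, (‖f (x+z)‖₊ : ℝ≥0∞) * (‖pt z‖₊ : ℝ≥0∞) := by
      rw [hP t f x]
      by_cases hint : Integrable (fun z => f (x + z) * pt z)
      · rw [← enorm_eq_nnnorm, ← ofReal_norm]
        calc ENNReal.ofReal ‖∫ z, f (x + z) * pt z‖
            ≤ ENNReal.ofReal (∫ z, ‖f (x + z) * pt z‖) :=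
              ENNReal.ofReal_le_ofReal (norm_integral_le_integral_norm _)
          _ = ∫⁻ z, (‖f (x+z) * pt z‖₊ : ℝ≥0∞) :=
              MeasureTheory.ofReal_integral_norm_eq_lintegral_enorm hint
          _ = ∫⁻ z, (‖f (x+z)‖₊ : ℝ≥0∞) * (‖pt z‖₊ : ℝ≥0∞) := by
              simp only [nnnorm_mul, ENNReal.coe_mul]
      · rw [integral_undef hint]
        simp
    rcases eq_or_lt_of_le hp1 with hp1e | hp1l
    · -- p = 1
      have hofp : ENNReal.ofReal p = 1 := by rw [← hp1e]; simp
      have hMp : M ^ (1/p) = M := by rw [← hp1e]; simp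
      have hN1 : N = ∫⁻ z, (‖f z‖₊ : ℝ≥0∞) := by
        rw [hNdef, hofp, eLpNorm_one_eq_lintegral_enorm]; simp only [enorm_eq_nnnorm]
      calc (‖P t f x‖₊ : ℝ≥0∞) ≤ ∫⁻ z, (‖f (x+z)‖₊ : ℝ≥0∞) * (‖pt z‖₊ : ℝ≥0∞) := step1
        _ ≤ ∫⁻ z, (‖f (x+z)‖₊ : ℝ≥0∞) * ENNReal.ofReal M := by
            refine lintegral_mono_ae ?_
            filter_upwards [hptenn] with z hz
            exact mul_le_mul_right hz _
        _ = ENNReal.ofReal M * ∫⁻ z, (‖f (x+z)‖₊ : ℝ≥0∞) := by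
            rw [lintegral_mul_const'' _ (by exact hfx.enorm : AEMeasurable (fun z => (‖f (x+z)‖₊ : ℝ≥0∞)) volume), mul_comm]
        _ = ENNReal.ofReal M * ∫⁻ z, (‖f z‖₊ : ℝ≥0∞) := by
            rw [lintegral_add_left_eq_self (fun z => (‖f z‖₊ : ℝ≥0∞)) x]
        _ = ENNReal.ofReal (M ^ (1/p)) * N := by rw [hMp, hN1]
    · -- 1 < p
      set q' := Real.conjExponent p with hq'def
      have hpq : p.HolderConjugate q' := Real.HolderConjugate.conjExponent hp1l
      have hq'1 : 1 < q' := hpq.symm.lt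
      have hq'0 : 0 < q' := lt_trans one_pos hq'1
      have hp1ne : p - 1 ≠ 0 := sub_ne_zero.mpr (ne_of_gt hp1l)
      have hexp : (q' - 1) * (1/q') = 1/p := by
        have h1 : q' = p/(p-1) := rfl
        rw [h1]
        field_simp
        ring
      have hN' : N = (∫⁻ z, (‖f z‖₊ : ℝ≥0∞) ^ p) ^ (1/p) := by
        rw [hNdef, eLpNorm_eq_lintegral_rpow_enorm_toReal (by simpa using hp0)
          (by simp), ENNReal.toReal_ofReal hp0.le]
        simp only [enorm_eq_nnnorm]
      have holder := ENNReal.lintegral_mul_le_Lp_mul_Lq volume hpq hfx.enorm hpt.1.enorm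
      have factor1 : ∫⁻ z, (‖f (x+z)‖₊ : ℝ≥0∞) ^ p = ∫⁻ z, (‖f z‖₊ : ℝ≥0∞) ^ p := by
        exact lintegral_add_left_eq_self (fun z => (‖f z‖₊ : ℝ≥0∞) ^ p) x
      have factor2 : ∫⁻ z, (‖pt z‖₊ : ℝ≥0∞) ^ q' ≤ (ENNReal.ofReal M) ^ (q' - 1) := by
        calc ∫⁻ z, (‖pt z‖₊ : ℝ≥0∞) ^ q'
            ≤ ∫⁻ z, (ENNReal.ofReal M) ^ (q'-1) * (‖pt z‖₊ : ℝ≥0∞) := by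
              refine lintegral_mono_ae ?_
              filter_upwards [hptenn] with z hz
              rcases eq_or_ne ((‖pt z‖₊ : ℝ≥0∞)) 0 with h0 | h0
              · rw [h0, ENNReal.zero_rpow_of_pos hq'0]
                exact bot_le
              · have heq : (‖pt z‖₊ : ℝ≥0∞) ^ q'
                    = (‖pt z‖₊ : ℝ≥0∞) ^ (q'-1) * (‖pt z‖₊ : ℝ≥0∞) := by
                  nth_rewrite 3 [← ENNReal.rpow_one ((‖pt z‖₊ : ℝ≥0∞))]
                  rw [← ENNReal.rpow_add _ _ h0 ENNReal.coe_ne_top, sub_add_cancel]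
                rw [heq]
                exact mul_le_mul_left (ENNReal.rpow_le_rpow hz (by linarith)) _
          _ = (ENNReal.ofReal M) ^ (q'-1) * ∫⁻ z, (‖pt z‖₊ : ℝ≥0∞) :=
              lintegral_const_mul'' _ hpt.1.enorm
          _ = (ENNReal.ofReal M) ^ (q'-1) := by rw [hptlint, mul_one]
      calc (‖P t f x‖₊ : ℝ≥0∞) ≤ ∫⁻ z, (‖f (x+z)‖₊ : ℝ≥0∞) * (‖pt z‖₊ : ℝ≥0∞) := step1
        _ ≤ (∫⁻ z, (‖f (x+z)‖₊ : ℝ≥0∞) ^ p) ^ (1/p) * (∫⁻ z, (‖pt z‖₊ : ℝ≥0∞) ^ q') ^ (1/q') := by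
            exact holder
        _ ≤ N * ((ENNReal.ofReal M) ^ (q'-1)) ^ (1/q') := by
            refine mul_le_mul' (le_of_eq ?_) (ENNReal.rpow_le_rpow factor2 (by positivity))
            rw [factor1, ← hN']
        _ = N * (ENNReal.ofReal M) ^ ((q'-1) * (1/q')) := by rw [← ENNReal.rpow_mul]
        _ = ENNReal.ofReal (M ^ (1/p)) * N := by
            rw [hexp, ENNReal.ofReal_rpow_of_nonneg hM0 (by positivity), mul_comm]
  calc eLpNorm (P t f) ⊤ volume = essSup (fun x => (‖P t f x‖₊ : ℝ≥0∞)) volume := by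
        rw [eLpNorm_exponent_top, eLpNormEssSup]; rfl
    _ ≤ ENNReal.ofReal (M ^ (1/p)) * N := essSup_le_of_ae_le _ (Eventually.of_forall key)
end
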